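/- Let b, d be real numbers. There exists a real number a such that (1+d²)·a⁴ + (2b²d² − 1 − b² − d²)·a² + b²d²(1+b²) = 0 if and only if 1 + b² + d² − 8b²d² ≥ 0. -/

import Mathlib

/-- The biquadratic equation
`(1+d²)a⁴ + (2b²d² − 1 − b² − d²)a² + b²d²(1+b²) = 0` has a real solution `a` if and only
if `1 + b² + d² − 8b²d² ≥ 0`. -/
theorem biquadratic_real_solvability (b d : ℝ) :
    (∃ a : ℝ, (1 + d ^ 2) * a ^ 4 + (2 * b ^ 2 * d ^ 2 - 1 - b ^ 2 - d ^ 2) * a ^ 2 +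
        b ^ 2 * d ^ 2 * (1 + b ^ 2) = 0) ↔
    1 + b ^ 2 + d ^ 2 - 8 * b ^ 2 * d ^ 2 ≥ 0 := by
  constructor
  · rintro ⟨a, ha⟩
    have hΔ : (1 + b ^ 2 + d ^ 2) * (1 + b ^ 2 + d ^ 2 - 8 * b ^ 2 * d ^ 2) =
        (2 * (1 + d ^ 2) * a ^ 2 + (2 * b ^ 2 * d ^ 2 - 1 - b ^ 2 - d ^ 2)) ^ 2 := by
      linear_combination (-4 * (1 + d ^ 2)) * ha
    have hS : (0:ℝ) < 1 + b ^ 2 + d ^ 2 := by positivity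
    nlinarith [hΔ, sq_nonneg (2 * (1 + d ^ 2) * a ^ 2 + (2 * b ^ 2 * d ^ 2 - 1 - b ^ 2 - d ^ 2))]
  · intro h
    set S : ℝ := 1 + b ^ 2 + d ^ 2 with hSdef
    have hSpos : (0:ℝ) < S := by positivity
    have hΔ : 0 ≤ S * (S - 8 * b ^ 2 * d ^ 2) := mul_nonneg hSpos.le (by linarith)
    set r : ℝ := Real.sqrt (S * (S - 8 * b ^ 2 * d ^ 2)) with hrdef
    have hr2 : r ^ 2 = S * (S - 8 * b ^ 2 * d ^ 2) := Real.sq_sqrt hΔ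
    have hrpos : 0 ≤ r := Real.sqrt_nonneg _
    have hbd : 8 * b ^ 2 * d ^ 2 ≤ S := by linarith
    have hxnum : 0 ≤ S - 2 * b ^ 2 * d ^ 2 + r := by nlinarith [sq_nonneg (b * d)]
    have hxpos : 0 ≤ (S - 2 * b ^ 2 * d ^ 2 + r) / (2 * (1 + d ^ 2)) :=
      div_nonneg hxnum (by positivity)
    refine ⟨Real.sqrt ((S - 2 * b ^ 2 * d ^ 2 + r) / (2 * (1 + d ^ 2))), ?_⟩
    have ha2 : (Real.sqrt ((S - 2 * b ^ 2 * d ^ 2 + r) / (2 * (1 + d ^ 2)))) ^ 2 =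
        (S - 2 * b ^ 2 * d ^ 2 + r) / (2 * (1 + d ^ 2)) := Real.sq_sqrt hxpos
    have ha4 : (Real.sqrt ((S - 2 * b ^ 2 * d ^ 2 + r) / (2 * (1 + d ^ 2)))) ^ 4 =
        ((S - 2 * b ^ 2 * d ^ 2 + r) / (2 * (1 + d ^ 2))) ^ 2 := by
      rw [show (4:ℕ) = 2 * 2 from rfl, pow_mul, ha2]
    rw [ha2, ha4]
    have hd : (2 * (1 + d ^ 2)) ≠ 0 := by positivity
    field_simp
    linear_combination hr2
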